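/- arXiv:2502.00084 — 3 statements merged into one kernel-verified Lean document; each statement's English description precedes it below -/
import Mathlib

section
/- Let A, B be real symmetric positive definite d×d matrices and set M := A^{1/2} B A^{1/2}. Define the linear maps T_0(x) := A^{−1/2} M^{1/2} A^{−1/2} x and, for ε > 0, T_ε(x) := (A^{−1/2} (M + (ε²/4) I_d)^{1/2} A^{−1/2} − (ε/2) A^{−1}) x. (T_0 is the Brenier map and T_ε the entropic Brenier map between the Gaussian measures N(0,A) and N(0,B).) Then for every R > 0 and every ε > 0, sup_{|x| ≤ R} |T_ε(x) − T_0(x)| ≤ R ε (‖A^{−1}‖_op / 2) · ( ε ‖M^{−1}‖_op^{1/2} / 4 + ε³ ‖M^{−1}‖_op^{3/2} / 16 + 1 ). -/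
open Matrix

set_option maxHeartbeats 1000000

/-- The operator norm of a square matrix with respect to the Euclidean norm on `ℝ^d`. -/
noncomputable def matOpNorm {d : ℕ} (M : Matrix (Fin d) (Fin d) ℝ) : ℝ :=
  ‖(Matrix.toEuclideanCLM (𝕜 := ℝ) M :
      EuclideanSpace ℝ (Fin d) →L[ℝ] EuclideanSpace ℝ (Fin d))‖

lemma aux_unitary_norm_le {d : ℕ} (U : Matrix (Fin d) (Fin d) ℝ)
    (hU : star U * U = 1) :
    ‖(Matrix.toEuclideanCLM (𝕜 := ℝ) U :
      EuclideanSpace ℝ (Fin d) →L[ℝ] EuclideanSpace ℝ (Fin d))‖ ≤ 1 := by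
  have h2 := CStarRing.norm_star_mul_self (x := Matrix.toEuclideanCLM (𝕜 := ℝ) U)
  rw [← StarHomClass.map_star, ← _root_.map_mul, hU, _root_.map_one] at h2
  have h3 : ‖(1 : EuclideanSpace ℝ (Fin d) →L[ℝ] EuclideanSpace ℝ (Fin d))‖ ≤ 1 :=
    ContinuousLinearMap.norm_id_le
  rw [h2] at h3
  nlinarith [norm_nonneg (Matrix.toEuclideanCLM (𝕜 := ℝ) U :
      EuclideanSpace ℝ (Fin d) →L[ℝ] EuclideanSpace ℝ (Fin d))]

lemma aux_diagonal_norm_le {d : ℕ} (f : Fin d → ℝ) {c : ℝ} (hc : 0 ≤ c)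
    (hf : ∀ i, |f i| ≤ c) :
    ‖(Matrix.toEuclideanCLM (𝕜 := ℝ) (Matrix.diagonal f) :
      EuclideanSpace ℝ (Fin d) →L[ℝ] EuclideanSpace ℝ (Fin d))‖ ≤ c := by
  refine ContinuousLinearMap.opNorm_le_bound _ hc fun x => ?_
  have happ : ∀ i, (Matrix.toEuclideanCLM (𝕜 := ℝ) (Matrix.diagonal f) x) i = f i * x i := by
    intro i
    have h1 : (Matrix.toEuclideanCLM (𝕜 := ℝ) (Matrix.diagonal f) x) i
        = ((Matrix.diagonal f) *ᵥ (WithLp.equiv 2 _ x)) i := by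
      rfl
    rw [h1, Matrix.mulVec_diagonal]
    rfl
  rw [EuclideanSpace.norm_eq, EuclideanSpace.norm_eq]
  have hsum : (∑ i, ‖(Matrix.toEuclideanCLM (𝕜 := ℝ) (Matrix.diagonal f) x) i‖ ^ 2)
      ≤ c ^ 2 * ∑ i, ‖x i‖ ^ 2 := by
    rw [Finset.mul_sum]
    refine Finset.sum_le_sum fun i _ => ?_
    rw [happ i]
    have : ‖f i * x i‖ = |f i| * ‖x i‖ := by
      rw [Real.norm_eq_abs, Real.norm_eq_abs, abs_mul]
    rw [this, mul_pow]
    have h2 : |f i| ^ 2 ≤ c ^ 2 := by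
      have := hf i
      nlinarith [abs_nonneg (f i)]
    nlinarith [sq_nonneg ‖x i‖, sq_nonneg (|f i|)]
  calc Real.sqrt (∑ i, ‖(Matrix.toEuclideanCLM (𝕜 := ℝ) (Matrix.diagonal f) x) i‖ ^ 2)
      ≤ Real.sqrt (c ^ 2 * ∑ i, ‖x i‖ ^ 2) := Real.sqrt_le_sqrt hsum
    _ = c * Real.sqrt (∑ i, ‖x i‖ ^ 2) := by
        rw [Real.sqrt_mul (sq_nonneg c), Real.sqrt_sq hc]

/-- explicit bound, uniform on the ball of radius `R`, between the entropic
Brenier map `T_ε` and the Brenier map `T_0` of two centered Gaussians `N(0,A)`, `N(0,B)`.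
Here `sA` is the symmetric positive definite square root of `A`, `M = A^{1/2} B A^{1/2}`,
`sM` its square root, and `sMε` the square root of `M + (ε²/4) I`. -/
theorem gaussian_entropic_map_uniform_bound {d : ℕ}
    (A B : Matrix (Fin d) (Fin d) ℝ) (hA : A.PosDef) (hB : B.PosDef)
    (sA : Matrix (Fin d) (Fin d) ℝ) (hsA : sA.PosDef) (hsA2 : sA * sA = A)
    (sM : Matrix (Fin d) (Fin d) ℝ) (hsM : sM.PosDef) (hsM2 : sM * sM = sA * B * sA)
    (ε R : ℝ) (hε : 0 < ε) (hR : 0 < R)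
    (sMε : Matrix (Fin d) (Fin d) ℝ) (hsMε : sMε.PosDef)
    (hsMε2 : sMε * sMε = sA * B * sA + (ε ^ 2 / 4) • (1 : Matrix (Fin d) (Fin d) ℝ)) :
    ∀ x : EuclideanSpace ℝ (Fin d), ‖x‖ ≤ R →
      ‖(Matrix.toEuclideanCLM (𝕜 := ℝ) (sA⁻¹ * sMε * sA⁻¹ - (ε / 2) • A⁻¹)) x -
        (Matrix.toEuclideanCLM (𝕜 := ℝ) (sA⁻¹ * sM * sA⁻¹)) x‖ ≤
      R * ε * (matOpNorm A⁻¹ / 2) *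
        (ε * matOpNorm (sA * B * sA)⁻¹ ^ ((1 : ℝ) / 2) / 4 +
          ε ^ 3 * matOpNorm (sA * B * sA)⁻¹ ^ ((3 : ℝ) / 2) / 16 + 1) := by
  intro x hx
  set c : ℝ := ε / 2 with hcdef
  have hcpos : 0 < c := by positivity
  set N : Matrix (Fin d) (Fin d) ℝ := sA * B * sA with hNdef
  -- positive semidefiniteness of N and N + (ε²/4)•1
  have hNps : N.PosSemidef := by
    have h := Matrix.posSemidef_self_mul_conjTranspose sM
    rwa [hsM.1, hsM2] at h
  have hNεps : (N + (ε ^ 2 / 4) • (1 : Matrix (Fin d) (Fin d) ℝ)).PosSemidef := by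
    have h := Matrix.posSemidef_self_mul_conjTranspose sMε
    rwa [hsMε.1, hsMε2] at h
  set U : Matrix (Fin d) (Fin d) ℝ := (hNps.1.eigenvectorUnitary : Matrix (Fin d) (Fin d) ℝ) with hUdef
  set lam : Fin d → ℝ := hNps.1.eigenvalues with hlamdef
  have hUsU : star U * U = 1 := Unitary.coe_star_mul_self _
  have hUUs : U * star U = 1 := Unitary.coe_mul_star_self _
  have hlam : ∀ i, 0 ≤ lam i := hNps.eigenvalues_nonneg
  have hspec : N = U * Matrix.diagonal lam * star U := by
    have h := hNps.1.spectral_theorem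
    simpa [RCLike.ofReal_real_eq_id, Function.comp] using h
  -- identify sM
  have hsMeq : sM = U * Matrix.diagonal (fun i => Real.sqrt (lam i)) * star U := by
    have hd : (Matrix.diagonal (fun i => Real.sqrt (lam i))).PosSemidef :=
      Matrix.posSemidef_diagonal_iff.mpr fun i => Real.sqrt_nonneg _
    have hps := hd.mul_mul_conjTranspose_same U
    rw [← Matrix.star_eq_conjTranspose] at hps
    have hsq : (U * Matrix.diagonal (fun i => Real.sqrt (lam i)) * star U) ^ 2 = N := by
      have h1 : (U * Matrix.diagonal (fun i => Real.sqrt (lam i)) * star U) ^ 2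
          = U * (Matrix.diagonal (fun i => Real.sqrt (lam i)) * (star U * U) *
            Matrix.diagonal (fun i => Real.sqrt (lam i))) * star U := by
        rw [pow_two]; noncomm_ring
      rw [h1, hUsU, mul_one, Matrix.diagonal_mul_diagonal]
      have h2 : (fun i => Real.sqrt (lam i) * Real.sqrt (lam i)) = lam := by
        funext i
        exact Real.mul_self_sqrt (hlam i)
      rw [h2, ← hspec]
    open scoped MatrixOrder in
    exact (CFC.sq_eq_sq_iff sM _ hsM.posSemidef.nonneg hps.nonneg).mp (by rw [hsq, pow_two, hsM2])
  -- identify sMε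
  set g : Fin d → ℝ := fun i => Real.sqrt (lam i + ε ^ 2 / 4) with hgdef
  have hSps : (U * Matrix.diagonal g * star U).PosSemidef := by
    have hd : (Matrix.diagonal g).PosSemidef :=
      Matrix.posSemidef_diagonal_iff.mpr fun i => Real.sqrt_nonneg _
    have := hd.mul_mul_conjTranspose_same U
    rwa [← Matrix.star_eq_conjTranspose] at this
  have hSsq : (U * Matrix.diagonal g * star U) ^ 2
      = N + (ε ^ 2 / 4) • (1 : Matrix (Fin d) (Fin d) ℝ) := by
    have h1 : (U * Matrix.diagonal g * star U) ^ 2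
        = U * (Matrix.diagonal g * (star U * U) * Matrix.diagonal g) * star U := by
      rw [pow_two]; noncomm_ring
    rw [h1, hUsU, mul_one, Matrix.diagonal_mul_diagonal]
    have h2 : (fun i => g i * g i) = fun i => lam i + ε ^ 2 / 4 := by
      funext i
      exact Real.mul_self_sqrt (add_nonneg (hlam i) (by positivity))
    rw [h2]
    have h3 : Matrix.diagonal (fun i => lam i + ε ^ 2 / 4)
        = Matrix.diagonal lam + (ε ^ 2 / 4) • (1 : Matrix (Fin d) (Fin d) ℝ) := by
      rw [Matrix.smul_one_eq_diagonal, ← Matrix.diagonal_add]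
    rw [h3, Matrix.mul_add, Matrix.add_mul, ← hspec]
    congr 1
    rw [Matrix.mul_smul, Matrix.smul_mul, mul_one, hUUs]
  have hsMεeq : sMε = U * Matrix.diagonal g * star U :=
    by open scoped MatrixOrder in
       exact (CFC.sq_eq_sq_iff sMε _ hsMε.posSemidef.nonneg hSps.nonneg).mp
         (by rw [hSsq, pow_two, hsMε2])
  -- the difference is a conjugated diagonal
  have hone : c • (1 : Matrix (Fin d) (Fin d) ℝ)
      = U * Matrix.diagonal (fun _ => c) * star U := by
    rw [Matrix.smul_one_eq_diagonal]
    have : U * Matrix.diagonal (fun _ : Fin d => c) * star U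
        = U * (Matrix.diagonal (fun _ : Fin d => c) * star U) := by rw [mul_assoc]
    rw [this, ← Matrix.smul_one_eq_diagonal, Matrix.smul_mul, one_mul, Matrix.mul_smul, hUUs,
      Matrix.smul_one_eq_diagonal]
  have hdiff : sMε - sM - c • (1 : Matrix (Fin d) (Fin d) ℝ)
      = U * Matrix.diagonal (fun i => g i - Real.sqrt (lam i) - c) * star U := by
    rw [hsMεeq, hsMeq, hone]
    have : Matrix.diagonal (fun i => g i - Real.sqrt (lam i) - c)
        = Matrix.diagonal g - Matrix.diagonal (fun i => Real.sqrt (lam i))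
          - Matrix.diagonal (fun _ => c) := by
      rw [← Matrix.diagonal_sub, ← Matrix.diagonal_sub]
    rw [this]
    noncomm_ring
  -- eigenvalue bound
  have hfb : ∀ i, |g i - Real.sqrt (lam i) - c| ≤ c := by
    intro i
    rw [abs_le]
    constructor
    · have h1 : Real.sqrt (lam i) ≤ g i := Real.sqrt_le_sqrt (by nlinarith [sq_nonneg ε])
      linarith
    · have h2 : g i ≤ Real.sqrt (lam i) + c := by
        have hnn : 0 ≤ Real.sqrt (lam i) + c := by positivity
        have : lam i + ε ^ 2 / 4 ≤ (Real.sqrt (lam i) + c) ^ 2 := by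
          have hs : Real.sqrt (lam i) * Real.sqrt (lam i) = lam i :=
            Real.mul_self_sqrt (hlam i)
          have hc2 : c ^ 2 = ε ^ 2 / 4 := by rw [hcdef]; ring
          nlinarith [Real.sqrt_nonneg (lam i)]
        calc g i = Real.sqrt (lam i + ε ^ 2 / 4) := rfl
          _ ≤ Real.sqrt ((Real.sqrt (lam i) + c) ^ 2) := Real.sqrt_le_sqrt this
          _ = Real.sqrt (lam i) + c := Real.sqrt_sq hnn
      linarith
  -- norm bound for the middle factor
  have hDnorm : ‖(Matrix.toEuclideanCLM (𝕜 := ℝ)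
      (sMε - sM - c • (1 : Matrix (Fin d) (Fin d) ℝ)))‖ ≤ c := by
    rw [hdiff, _root_.map_mul, _root_.map_mul]
    have hU1 : ‖(Matrix.toEuclideanCLM (𝕜 := ℝ) U)‖ ≤ 1 := aux_unitary_norm_le U hUsU
    have hU2 : ‖(Matrix.toEuclideanCLM (𝕜 := ℝ) (star U))‖ ≤ 1 := by
      refine aux_unitary_norm_le (star U) ?_
      rw [star_star, hUUs]
    have hDg : ‖(Matrix.toEuclideanCLM (𝕜 := ℝ)
        (Matrix.diagonal (fun i => g i - Real.sqrt (lam i) - c)))‖ ≤ c :=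
      aux_diagonal_norm_le _ hcpos.le hfb
    calc ‖Matrix.toEuclideanCLM (𝕜 := ℝ) U *
          Matrix.toEuclideanCLM (𝕜 := ℝ) (Matrix.diagonal fun i => g i - Real.sqrt (lam i) - c) *
          Matrix.toEuclideanCLM (𝕜 := ℝ) (star U)‖
        ≤ ‖Matrix.toEuclideanCLM (𝕜 := ℝ) U *
            Matrix.toEuclideanCLM (𝕜 := ℝ)
              (Matrix.diagonal fun i => g i - Real.sqrt (lam i) - c)‖ *
          ‖Matrix.toEuclideanCLM (𝕜 := ℝ) (star U)‖ := norm_mul_le _ _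
      _ ≤ ‖Matrix.toEuclideanCLM (𝕜 := ℝ) U‖ *
          ‖Matrix.toEuclideanCLM (𝕜 := ℝ)
            (Matrix.diagonal fun i => g i - Real.sqrt (lam i) - c)‖ *
          ‖Matrix.toEuclideanCLM (𝕜 := ℝ) (star U)‖ :=
          mul_le_mul_of_nonneg_right (norm_mul_le _ _) (norm_nonneg _)
      _ ≤ 1 * c * 1 := by
          refine mul_le_mul (mul_le_mul hU1 hDg (norm_nonneg _) zero_le_one) hU2
            (norm_nonneg _) ?_
          linarith
      _ = c := by ring
  -- square of the norm of sA⁻¹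
  have hP2 : ‖Matrix.toEuclideanCLM (𝕜 := ℝ) sA⁻¹‖ * ‖Matrix.toEuclideanCLM (𝕜 := ℝ) sA⁻¹‖
      = matOpNorm A⁻¹ := by
    have hstar : star (Matrix.toEuclideanCLM (𝕜 := ℝ) sA⁻¹)
        = Matrix.toEuclideanCLM (𝕜 := ℝ) sA⁻¹ := by
      rw [← StarHomClass.map_star]
      congr 1
      rw [Matrix.star_eq_conjTranspose, Matrix.conjTranspose_nonsing_inv, hsA.1]
    have h := CStarRing.norm_star_mul_self (x := Matrix.toEuclideanCLM (𝕜 := ℝ) sA⁻¹)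
    rw [hstar, ← _root_.map_mul] at h
    have hAinv : sA⁻¹ * sA⁻¹ = A⁻¹ := by rw [← Matrix.mul_inv_rev, hsA2]
    rw [hAinv] at h
    exact h.symm
  -- rearrange the matrix difference
  have hMrw : sA⁻¹ * sMε * sA⁻¹ - c • A⁻¹ - sA⁻¹ * sM * sA⁻¹
      = sA⁻¹ * (sMε - sM - c • (1 : Matrix (Fin d) (Fin d) ℝ)) * sA⁻¹ := by
    have h1 : A⁻¹ = sA⁻¹ * sA⁻¹ := by rw [← hsA2, Matrix.mul_inv_rev]
    rw [h1, Matrix.mul_sub, Matrix.mul_sub, Matrix.sub_mul, Matrix.sub_mul,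
      Matrix.mul_smul, Matrix.smul_mul, mul_one]
    abel
  -- main estimate
  have hmain : ‖(Matrix.toEuclideanCLM (𝕜 := ℝ) (sA⁻¹ * sMε * sA⁻¹ - c • A⁻¹)) x -
        (Matrix.toEuclideanCLM (𝕜 := ℝ) (sA⁻¹ * sM * sA⁻¹)) x‖
      ≤ matOpNorm A⁻¹ * c * R := by
    have heq : (Matrix.toEuclideanCLM (𝕜 := ℝ) (sA⁻¹ * sMε * sA⁻¹ - c • A⁻¹)) x -
        (Matrix.toEuclideanCLM (𝕜 := ℝ) (sA⁻¹ * sM * sA⁻¹)) x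
        = (Matrix.toEuclideanCLM (𝕜 := ℝ)
            (sA⁻¹ * (sMε - sM - c • (1 : Matrix (Fin d) (Fin d) ℝ)) * sA⁻¹)) x := by
      rw [← ContinuousLinearMap.sub_apply, ← _root_.map_sub, hMrw]
    rw [heq, _root_.map_mul, _root_.map_mul]
    set TP := Matrix.toEuclideanCLM (𝕜 := ℝ) sA⁻¹ with hTP
    set TD := Matrix.toEuclideanCLM (𝕜 := ℝ)
      (sMε - sM - c • (1 : Matrix (Fin d) (Fin d) ℝ)) with hTD
    have hb1 : ‖(TP * TD * TP) x‖ ≤ ‖TP * TD * TP‖ * ‖x‖ :=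
      ContinuousLinearMap.le_opNorm _ _
    have hb2 : ‖TP * TD * TP‖ ≤ ‖TP‖ * ‖TD‖ * ‖TP‖ := by
      calc ‖TP * TD * TP‖ ≤ ‖TP * TD‖ * ‖TP‖ := norm_mul_le _ _
        _ ≤ ‖TP‖ * ‖TD‖ * ‖TP‖ :=
            mul_le_mul_of_nonneg_right (norm_mul_le _ _) (norm_nonneg _)
    have hb3 : ‖TP‖ * ‖TD‖ * ‖TP‖ ≤ ‖TP‖ * c * ‖TP‖ := by
      have := hDnorm
      have h0 : (0:ℝ) ≤ ‖TP‖ := norm_nonneg _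
      nlinarith [norm_nonneg TD]
    have hb4 : ‖TP‖ * c * ‖TP‖ = matOpNorm A⁻¹ * c := by
      rw [← hP2]; ring
    calc ‖(TP * TD * TP) x‖ ≤ ‖TP * TD * TP‖ * ‖x‖ := hb1
      _ ≤ (‖TP‖ * c * ‖TP‖) * ‖x‖ := by
          apply mul_le_mul_of_nonneg_right _ (norm_nonneg x)
          exact hb2.trans hb3
      _ = (matOpNorm A⁻¹ * c) * ‖x‖ := by rw [hb4]
      _ ≤ (matOpNorm A⁻¹ * c) * R := by
          apply mul_le_mul_of_nonneg_left hx
          have : (0:ℝ) ≤ matOpNorm A⁻¹ := norm_nonneg _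
          positivity
      _ = matOpNorm A⁻¹ * c * R := by ring
  -- conclude
  have hm0 : (0:ℝ) ≤ matOpNorm A⁻¹ := norm_nonneg _
  have h1 : (0:ℝ) ≤ matOpNorm N⁻¹ := norm_nonneg _
  have h2 : (0:ℝ) ≤ matOpNorm N⁻¹ ^ ((1:ℝ)/2) := Real.rpow_nonneg h1 _
  have h3 : (0:ℝ) ≤ matOpNorm N⁻¹ ^ ((3:ℝ)/2) := Real.rpow_nonneg h1 _
  have hK1 : (1:ℝ) ≤ ε * matOpNorm N⁻¹ ^ ((1:ℝ)/2) / 4 +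
      ε ^ 3 * matOpNorm N⁻¹ ^ ((3:ℝ)/2) / 16 + 1 := by
    nlinarith [hε.le, pow_nonneg hε.le 3]
  calc ‖(Matrix.toEuclideanCLM (𝕜 := ℝ) (sA⁻¹ * sMε * sA⁻¹ - c • A⁻¹)) x -
        (Matrix.toEuclideanCLM (𝕜 := ℝ) (sA⁻¹ * sM * sA⁻¹)) x‖
      ≤ matOpNorm A⁻¹ * c * R := hmain
    _ = R * ε * (matOpNorm A⁻¹ / 2) := by rw [hcdef]; ring
    _ ≤ R * ε * (matOpNorm A⁻¹ / 2) *
        (ε * matOpNorm N⁻¹ ^ ((1:ℝ)/2) / 4 +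
          ε ^ 3 * matOpNorm N⁻¹ ^ ((3:ℝ)/2) / 16 + 1) := by
        apply le_mul_of_one_le_right _ hK1
        positivity
end

section
/- Let ε > 0, let ν be a probability measure on ℝ^d with finite second moment, and let ψ : ℝ^d → ℝ be a Borel function such that for every x ∈ ℝ^d, 0 < ∫ exp((x·y − ψ(y))/ε) dν(y) < ∞ and ∫ |y| · exp((x·y − ψ(y))/ε) dν(y) < ∞. Then the function φ(x) := ε log ∫ exp((x·y − ψ(y))/ε) dν(y) is differentiable on ℝ^d and its gradient is given by ∇φ(x) = (∫ y · exp((x·y − ψ(y))/ε) dν(y)) / (∫ exp((x·y − ψ(y))/ε) dν(y)). -/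
set_option maxHeartbeats 1000000
set_option synthInstance.maxHeartbeats 400000


open MeasureTheory Real
open scoped RealInnerProductSpace

/-- differentiability of the log-partition function
`φ(x) = ε log ∫ e^{(x·y - ψ(y))/ε} dν(y)`, whose gradient at `x` is the barycenter
`(∫ y e^{(x·y - ψ(y))/ε} dν(y)) / (∫ e^{(x·y - ψ(y))/ε} dν(y))`. -/
theorem gradient_log_partition {d : ℕ}
    (ε : ℝ) (hε : 0 < ε)
    (ν : Measure (EuclideanSpace ℝ (Fin d))) [IsProbabilityMeasure ν]
    (hν2 : Integrable (fun y => ‖y‖ ^ 2) ν)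
    (ψ : EuclideanSpace ℝ (Fin d) → ℝ) (hψ : Measurable ψ)
    (hpos : ∀ x, 0 < ∫ y, Real.exp ((⟪x, y⟫ - ψ y) / ε) ∂ν)
    (hint : ∀ x, Integrable (fun y => Real.exp ((⟪x, y⟫ - ψ y) / ε)) ν)
    (hint' : ∀ x, Integrable (fun y => ‖y‖ * Real.exp ((⟪x, y⟫ - ψ y) / ε)) ν) :
    ∀ x, HasGradientAt (fun z => ε * Real.log (∫ y, Real.exp ((⟪z, y⟫ - ψ y) / ε) ∂ν))
      ((∫ y, Real.exp ((⟪x, y⟫ - ψ y) / ε) ∂ν)⁻¹ •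
        ∫ y, Real.exp ((⟪x, y⟫ - ψ y) / ε) • y ∂ν) x := by
  intro x
  have hεne : ε ≠ 0 := hε.ne'
  set e : EuclideanSpace ℝ (Fin d) → EuclideanSpace ℝ (Fin d) → ℝ :=
    fun z y => Real.exp ((⟪z, y⟫ - ψ y) / ε) with he
  have hmeas : ∀ z, Measurable (fun y => e z y) := by
    intro z
    have h1 : Continuous (fun y : EuclideanSpace ℝ (Fin d) => ⟪z, y⟫) :=
      continuous_const.inner continuous_id
    exact ((h1.measurable.sub hψ).div_const ε).exp
  -- the candidate derivative family
  set F' : EuclideanSpace ℝ (Fin d) → EuclideanSpace ℝ (Fin d) →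
      (EuclideanSpace ℝ (Fin d) →L[ℝ] ℝ) :=
    fun z y => (e z y / ε) • (innerSL ℝ) y with hF'
  -- cube vertices
  set v : (Fin d → Bool) → EuclideanSpace ℝ (Fin d) :=
    fun σ => WithLp.toLp 2 (fun i => if σ i then (1 : ℝ) else -1 : Fin d → ℝ) with hv
  set bound : EuclideanSpace ℝ (Fin d) → ℝ :=
    fun y => (1 / ε) * ∑ σ : Fin d → Bool, ‖y‖ * e (x + v σ) y with hbound
  -- key comparison
  have hcomp : ∀ y : EuclideanSpace ℝ (Fin d), ∀ z ∈ Metric.ball x 1,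
      e z y ≤ ∑ σ : Fin d → Bool, e (x + v σ) y := by
    intro y z hz
    set s : Fin d → Bool := fun i => decide (0 ≤ y i) with hs
    have hvs : ⟪v s, y⟫ = ∑ i, |y i| := by
      rw [PiLp.inner_apply]
      refine Finset.sum_congr rfl fun i _ => ?_
      simp only [RCLike.inner_apply, conj_trivial, hv, hs]
      by_cases h : 0 ≤ y i
      · simp [h, abs_of_nonneg h]
      · simp [h, abs_of_neg (lt_of_not_ge h)]
    have hnorm_le : ‖y‖ ≤ ∑ i, |y i| := by
      rw [EuclideanSpace.norm_eq]
      have h1 : ∑ i, ‖y i‖ ^ 2 ≤ (∑ i, |y i|) ^ 2 := by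
        simpa [Real.norm_eq_abs] using
          Finset.sum_sq_le_sq_sum_of_nonneg (s := Finset.univ)
            (f := fun i => |y i|) (fun i _ => abs_nonneg (y i))
      calc Real.sqrt (∑ i, ‖y i‖ ^ 2) ≤ Real.sqrt ((∑ i, |y i|) ^ 2) :=
            Real.sqrt_le_sqrt h1
        _ = ∑ i, |y i| := Real.sqrt_sq (Finset.sum_nonneg fun i _ => abs_nonneg _)
    have hzx : ⟪z - x, y⟫ ≤ ‖y‖ := by
      calc ⟪z - x, y⟫ ≤ ‖z - x‖ * ‖y‖ := real_inner_le_norm _ _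
        _ ≤ 1 * ‖y‖ := by
            apply mul_le_mul_of_nonneg_right _ (norm_nonneg _)
            exact le_of_lt (by simpa [dist_eq_norm] using hz)
        _ = ‖y‖ := one_mul _
    have hin : ⟪z, y⟫ ≤ ⟪x + v s, y⟫ := by
      have h1 : ⟪z, y⟫ = ⟪x, y⟫ + ⟪z - x, y⟫ := by
        rw [← inner_add_left]; congr 1; abel
      have h2 : ⟪x + v s, y⟫ = ⟪x, y⟫ + ⟪v s, y⟫ := inner_add_left _ _ _
      rw [h1, h2, hvs]
      have := hzx.trans hnorm_le
      linarith
    have hle : e z y ≤ e (x + v s) y := by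
      apply Real.exp_le_exp.2
      gcongr
    refine hle.trans ?_
    exact Finset.single_le_sum (f := fun σ => e (x + v σ) y)
      (fun σ _ => (Real.exp_pos _).le) (Finset.mem_univ s)
  -- differentiability of the inner function
  have hdiff : ∀ y : EuclideanSpace ℝ (Fin d), ∀ z : EuclideanSpace ℝ (Fin d),
      HasFDerivAt (fun w => e w y) (F' z y) z := by
    intro y z
    have h0 : HasFDerivAt (fun w : EuclideanSpace ℝ (Fin d) => ⟪w, y⟫)
        ((innerSL ℝ) y) z := by
      have h1 := ((innerSL ℝ) y).hasFDerivAt (x := z)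
      have : (fun w : EuclideanSpace ℝ (Fin d) => ⟪w, y⟫) =
          fun w => (innerSL ℝ) y w := by
        funext w; exact real_inner_comm _ _
      rw [this]
      exact h1
    have h1 : HasFDerivAt (fun w => (⟪w, y⟫ - ψ y) / ε)
        (ε⁻¹ • (innerSL ℝ) y) z := by
      simp only [div_eq_inv_mul]
      exact (h0.sub_const (ψ y)).const_mul ε⁻¹
    have h2 := h1.exp
    have h3 : e z y • ε⁻¹ • (innerSL ℝ) y = F' z y := by
      show _ = (e z y / ε) • (innerSL ℝ) y
      rw [smul_smul, div_eq_mul_inv]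
    rw [← h3]
    exact h2
  have key : HasFDerivAt (fun z => ∫ y, e z y ∂ν) (∫ y, F' x y ∂ν) x := by
    apply hasFDerivAt_integral_of_dominated_of_fderiv_le
      (F := fun z y => e z y) (F' := F') (bound := bound) (s := Metric.ball x 1) (Metric.ball_mem_nhds x zero_lt_one)
    · exact Filter.Eventually.of_forall fun z => (hmeas z).aestronglyMeasurable
    · exact hint x
    · exact (((hmeas x).div_const ε).aestronglyMeasurable).smul
        ((innerSL ℝ).continuous.aestronglyMeasurable)
    · refine Filter.Eventually.of_forall fun y => fun z hz => ?_
      have h1 : ‖F' z y‖ ≤ (e z y / ε) * ‖y‖ := by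
        refine ContinuousLinearMap.opNorm_le_bound _
          (mul_nonneg (div_nonneg (Real.exp_pos _).le hε.le) (norm_nonneg _))
          fun w => ?_
        simp only [hF', ContinuousLinearMap.smul_apply, innerSL_apply_apply, smul_eq_mul]
        rw [Real.norm_eq_abs, abs_mul,
          abs_of_nonneg (div_nonneg (Real.exp_pos _).le hε.le), mul_assoc]
        exact mul_le_mul_of_nonneg_left
          ((abs_real_inner_le_norm y w).trans (le_of_eq rfl))
          (div_nonneg (Real.exp_pos _).le hε.le)
      refine h1.trans ?_
      show e z y / ε * ‖y‖ ≤ 1 / ε * ∑ σ : Fin d → Bool, ‖y‖ * e (x + v σ) y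
      rw [Finset.mul_sum]
      have := hcomp y z hz
      calc e z y / ε * ‖y‖ ≤ (∑ σ : Fin d → Bool, e (x + v σ) y) / ε * ‖y‖ := by
            gcongr
        _ = ∑ σ : Fin d → Bool, 1 / ε * (‖y‖ * e (x + v σ) y) := by
            rw [Finset.sum_div, Finset.sum_mul]
            refine Finset.sum_congr rfl fun σ _ => ?_
            ring
    · exact (integrable_finset_sum _ fun σ _ => hint' (x + v σ)).const_mul _
    · exact Filter.Eventually.of_forall fun y => fun z _ => hdiff y z
  -- integrability facts
  have hB : Integrable (fun y => Real.exp ((⟪x, y⟫ - ψ y) / ε) • y) ν := by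
    refine ((hint' x).mono' ?_ ?_)
    · exact ((hmeas x).aestronglyMeasurable).smul aestronglyMeasurable_id
    · refine Filter.Eventually.of_forall fun y => ?_
      rw [norm_smul, Real.norm_eq_abs, abs_of_nonneg (Real.exp_pos _).le, mul_comm]
  have hD : Integrable (fun y => F' x y) ν := by
    refine (((hint' x).const_mul (1 / ε)).mono' ?_ ?_)
    · exact (((hmeas x).div_const ε).aestronglyMeasurable).smul
        ((innerSL ℝ).continuous.aestronglyMeasurable)
    · refine Filter.Eventually.of_forall fun y => ?_
      refine ContinuousLinearMap.opNorm_le_bound _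
        (mul_nonneg (by positivity)
          (mul_nonneg (norm_nonneg _) (Real.exp_pos _).le)) fun w => ?_
      simp only [hF', ContinuousLinearMap.smul_apply, innerSL_apply_apply, smul_eq_mul]
      rw [Real.norm_eq_abs, abs_mul,
        abs_of_nonneg (div_nonneg (Real.exp_pos _).le hε.le)]
      calc e x y / ε * |⟪y, w⟫| ≤ e x y / ε * (‖y‖ * ‖w‖) := by
            exact mul_le_mul_of_nonneg_left (abs_real_inner_le_norm y w)
              (div_nonneg (Real.exp_pos _).le hε.le)
        _ = 1 / ε * (‖y‖ * Real.exp ((⟪x, y⟫ - ψ y) / ε)) * ‖w‖ := by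
            show e x y / ε * (‖y‖ * ‖w‖) = 1 / ε * (‖y‖ * e x y) * ‖w‖
            ring
  -- chain rule
  have hFx : (0 : ℝ) < ∫ y, e x y ∂ν := hpos x
  have hlog := Real.hasDerivAt_log (ne_of_gt hFx)
  have comp := hlog.comp_hasFDerivAt x key
  have final := comp.const_mul ε
  rw [hasGradientAt_iff_hasFDerivAt]
  have hDw : ∀ w : EuclideanSpace ℝ (Fin d), (∫ y, F' x y ∂ν) w
      = ∫ y, (Real.exp ((⟪x, y⟫ - ψ y) / ε) / ε) * ⟪y, w⟫ ∂ν := by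
    intro w
    rw [ContinuousLinearMap.integral_apply hD]
    refine integral_congr_ae (Filter.Eventually.of_forall fun y => ?_)
    simp only [hF', he, ContinuousLinearMap.smul_apply, innerSL_apply_apply, smul_eq_mul]
  have hBw : ∀ w : EuclideanSpace ℝ (Fin d),
      ⟪w, ∫ y, Real.exp ((⟪x, y⟫ - ψ y) / ε) • y ∂ν⟫
      = ∫ y, Real.exp ((⟪x, y⟫ - ψ y) / ε) * ⟪y, w⟫ ∂ν := by
    intro w
    have h1 : ⟪w, ∫ y, Real.exp ((⟪x, y⟫ - ψ y) / ε) • y ∂ν⟫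
        = ∫ y, ⟪w, Real.exp ((⟪x, y⟫ - ψ y) / ε) • y⟫ ∂ν :=
      (integral_inner hB w).symm
    rw [h1]
    refine integral_congr_ae (Filter.Eventually.of_forall fun y => ?_)
    show ⟪w, Real.exp ((⟪x, y⟫ - ψ y) / ε) • y⟫
      = Real.exp ((⟪x, y⟫ - ψ y) / ε) * ⟪y, w⟫
    have h2 : ⟪w, Real.exp ((⟪x, y⟫ - ψ y) / ε) • y⟫
        = Real.exp ((⟪x, y⟫ - ψ y) / ε) * ⟪w, y⟫ := real_inner_smul_right _ _ _
    rw [h2, real_inner_comm w y]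
  refine final.congr_fderiv (Eq.symm ?_)
  apply ContinuousLinearMap.ext
  intro w
  show ⟪(∫ y, Real.exp ((⟪x, y⟫ - ψ y) / ε) ∂ν)⁻¹ •
      ∫ y, Real.exp ((⟪x, y⟫ - ψ y) / ε) • y ∂ν, w⟫
    = ε * ((∫ y, e x y ∂ν)⁻¹ * (∫ y, F' x y ∂ν) w)
  have l1 : ⟪(∫ y, Real.exp ((⟪x, y⟫ - ψ y) / ε) ∂ν)⁻¹ •
      ∫ y, Real.exp ((⟪x, y⟫ - ψ y) / ε) • y ∂ν, w⟫
      = (∫ y, Real.exp ((⟪x, y⟫ - ψ y) / ε) ∂ν)⁻¹ *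
        ⟪∫ y, Real.exp ((⟪x, y⟫ - ψ y) / ε) • y ∂ν, w⟫ :=
    real_inner_smul_left _ _ _
  have l2 : ⟪∫ y, Real.exp ((⟪x, y⟫ - ψ y) / ε) • y ∂ν, w⟫
      = ⟪w, ∫ y, Real.exp ((⟪x, y⟫ - ψ y) / ε) • y ∂ν⟫ := real_inner_comm _ _
  rw [l1, l2, hBw w, hDw w]
  have hmul : ∀ y : EuclideanSpace ℝ (Fin d),
      Real.exp ((⟪x, y⟫ - ψ y) / ε) / ε * ⟪y, w⟫
      = ε⁻¹ * (Real.exp ((⟪x, y⟫ - ψ y) / ε) * ⟪y, w⟫) := fun y => by ring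
  simp_rw [hmul]
  rw [integral_const_mul]
  have heq : (∫ y, e x y ∂ν) = ∫ y, Real.exp ((⟪x, y⟫ - ψ y) / ε) ∂ν := rfl
  rw [heq]
  have hcancel : ε * ε⁻¹ = 1 := mul_inv_cancel₀ hεne
  calc (∫ y, Real.exp ((⟪x, y⟫ - ψ y) / ε) ∂ν)⁻¹ *
        ∫ y, Real.exp ((⟪x, y⟫ - ψ y) / ε) * ⟪y, w⟫ ∂ν
      = (ε * ε⁻¹) * ((∫ y, Real.exp ((⟪x, y⟫ - ψ y) / ε) ∂ν)⁻¹ *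
        ∫ y, Real.exp ((⟪x, y⟫ - ψ y) / ε) * ⟪y, w⟫ ∂ν) := by rw [hcancel, one_mul]
    _ = ε * ((∫ y, Real.exp ((⟪x, y⟫ - ψ y) / ε) ∂ν)⁻¹ *
        (ε⁻¹ * ∫ y, Real.exp ((⟪x, y⟫ - ψ y) / ε) * ⟪y, w⟫ ∂ν)) := by ring
end

section
/- For every dimension d ≥ 1 there exists a constant C > 0 (depending only on d) such that for every twice continuously differentiable, compactly supported function u : ℝ^d → ℝ, sup_{x ∈ ℝ^d} |∇u(x)| ≤ C · (sup_{x ∈ ℝ^d} |∇²u(x)|)^{(d+2)/(d+4)} · (∫_{ℝ^d} |u(x)|² dx)^{1/(d+4)}. -/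
open MeasureTheory Metric Set

theorem my_norm_fderiv_fderiv {E : Type*} [NormedAddCommGroup E] [NormedSpace ℝ E]
    (u : E → ℝ) (y : E) :
    ‖fderiv ℝ (fderiv ℝ u) y‖ = ‖iteratedFDeriv ℝ 2 u y‖ := by
  apply le_antisymm
  · apply ContinuousLinearMap.opNorm_le_bound _ (norm_nonneg _)
    intro v
    apply ContinuousLinearMap.opNorm_le_bound _ (by positivity)
    intro w
    have := (iteratedFDeriv ℝ 2 u y).le_opNorm ![v, w]
    rw [iteratedFDeriv_two_apply] at this
    simpa [Fin.prod_univ_two, mul_assoc] using this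
  · refine ContinuousMultilinearMap.opNorm_le_bound (norm_nonneg (fderiv ℝ (fderiv ℝ u) y)) ?_
    intro m
    rw [iteratedFDeriv_two_apply]
    calc ‖fderiv ℝ (fderiv ℝ u) y (m 0) (m 1)‖
        ≤ ‖fderiv ℝ (fderiv ℝ u) y (m 0)‖ * ‖m 1‖ := ContinuousLinearMap.le_opNorm _ _
      _ ≤ ‖fderiv ℝ (fderiv ℝ u) y‖ * ‖m 0‖ * ‖m 1‖ :=
          mul_le_mul_of_nonneg_right (ContinuousLinearMap.le_opNorm _ _) (norm_nonneg _)
      _ = ‖fderiv ℝ (fderiv ℝ u) y‖ * ∏ i, ‖m i‖ := by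
          rw [Fin.prod_univ_two, mul_assoc]

set_option maxHeartbeats 1000000 in
/-- Gagliardo–Nirenberg interpolation, `j = 1`, `k = 2`, `p = ∞`, `q = 2`,
`r = ∞`, `θ = (d+2)/(d+4)`: `‖∇u‖_∞ ≤ C ‖∇²u‖_∞^{(d+2)/(d+4)} ‖u‖_2^{2/(d+4)}` for every
`C²` compactly supported `u : ℝ^d → ℝ`. -/
theorem gagliardo_nirenberg_grad_sup (d : ℕ) (hd : 1 ≤ d) :
    ∃ C > (0 : ℝ), ∀ u : EuclideanSpace ℝ (Fin d) → ℝ,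
      ContDiff ℝ 2 u → HasCompactSupport u →
      ∀ x, ‖gradient u x‖ ≤
        C * (⨆ y, ‖iteratedFDeriv ℝ 2 u y‖) ^ (((d : ℝ) + 2) / ((d : ℝ) + 4)) *
          (∫ y, |u y| ^ 2) ^ ((1 : ℝ) / ((d : ℝ) + 4)) := by
  haveI : Nonempty (Fin d) := ⟨⟨0, hd⟩⟩
  haveI : Nontrivial (EuclideanSpace ℝ (Fin d)) := inferInstance
  -- volume of unit ball
  set c : ℝ := (volume (ball (0 : EuclideanSpace ℝ (Fin d)) 1)).toReal with hcdef
  have hc : 0 < c := by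
    apply ENNReal.toReal_pos
    · exact (measure_ball_pos volume _ one_pos).ne'
    · exact measure_ball_lt_top.ne
  set K : ℝ := (18 : ℝ) ^ (d + 2) / c with hKdef
  have hK : 0 < K := by positivity
  refine ⟨K ^ ((1 : ℝ) / ((d : ℝ) + 4)), by positivity, ?_⟩
  intro u hu hcs x
  set M := ⨆ y, ‖iteratedFDeriv ℝ 2 u y‖ with hMdef
  set I := ∫ y, |u y| ^ 2 with hIdef
  have hM0 : 0 ≤ M := Real.iSup_nonneg fun y => norm_nonneg _
  have hI0 : 0 ≤ I := integral_nonneg fun y => by positivity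
  have hRHS0 : 0 ≤ K ^ ((1 : ℝ) / ((d : ℝ) + 4)) * M ^ (((d : ℝ) + 2) / ((d : ℝ) + 4)) *
      I ^ ((1 : ℝ) / ((d : ℝ) + 4)) := by
    have := Real.rpow_nonneg hM0 (((d : ℝ) + 2) / ((d : ℝ) + 4))
    have := Real.rpow_nonneg hI0 ((1 : ℝ) / ((d : ℝ) + 4))
    positivity
  have hgrad : ‖gradient u x‖ = ‖fderiv ℝ u x‖ := by
    rw [gradient]; exact LinearIsometryEquiv.norm_map _ _
  rw [hgrad]
  by_cases hu0 : u = 0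
  · subst hu0
    have h0 : fderiv ℝ (0 : EuclideanSpace ℝ (Fin d) → ℝ) x = 0 := fderiv_const_apply 0
    rw [h0, norm_zero]
    exact hRHS0
  -- u nonzero: get maximum point
  have hKcpt : IsCompact (tsupport u) := hcs
  have hKne : (tsupport u).Nonempty := by
    rcases Function.ne_iff.1 hu0 with ⟨z, hz⟩
    exact ⟨z, subset_tsupport u (by simpa using hz)⟩
  obtain ⟨x₀, hx₀K, hx₀max⟩ :=
    hKcpt.exists_isMaxOn hKne (continuous_abs.comp hu.continuous).continuousOn
  set A : ℝ := |u x₀| with hAdef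
  have hA : ∀ y, |u y| ≤ A := by
    intro y
    by_cases hy : y ∈ tsupport u
    · exact hx₀max hy
    · rw [image_eq_zero_of_notMem_tsupport hy]
      simp [hAdef, abs_nonneg]
  have hApos : 0 < A := by
    rcases Function.ne_iff.1 hu0 with ⟨z, hz⟩
    exact lt_of_lt_of_le (abs_pos.2 (by simpa using hz)) (hA z)
  -- bounds on second derivative
  have hMbdd : BddAbove (Set.range fun y => ‖iteratedFDeriv ℝ 2 u y‖) :=
    (hu.continuous_iteratedFDeriv le_rfl).norm.bddAbove_range_of_hasCompactSupport
      (hcs.iteratedFDeriv 2).norm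
  have hMle : ∀ y, ‖iteratedFDeriv ℝ 2 u y‖ ≤ M := fun y => le_ciSup hMbdd y
  have hdiff : Differentiable ℝ u := hu.differentiable (by norm_num)
  have hdiff2 : Differentiable ℝ (fderiv ℝ u) :=
    (hu.fderiv_right (m := 1) (by norm_num)).differentiable (by norm_num)
  -- Landau-type pointwise estimate
  have key1 : ∀ (z v : EuclideanSpace ℝ (Fin d)), ‖fderiv ℝ u z v‖ ≤ 2 * A + M * ‖v‖ ^ 2 := by
    intro z v
    have hs : Convex ℝ (closedBall z ‖v‖) := convex_closedBall _ _
    have hzmem : z ∈ closedBall z ‖v‖ := mem_closedBall_self (norm_nonneg v)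
    have hvmem : z + v ∈ closedBall z ‖v‖ := by
      simp [mem_closedBall, dist_eq_norm]
    have hlip : ∀ y ∈ closedBall z ‖v‖, ‖fderiv ℝ u y - fderiv ℝ u z‖ ≤ M * ‖v‖ := by
      intro y hy
      have h1 := hs.norm_image_sub_le_of_norm_fderiv_le (fun w _ => hdiff2 w)
        (fun w _ => by rw [my_norm_fderiv_fderiv]; exact hMle w) hzmem hy
      refine h1.trans (mul_le_mul_of_nonneg_left ?_ hM0)
      rwa [← dist_eq_norm, ← mem_closedBall]
    have htay := hs.norm_image_sub_le_of_norm_fderiv_le' (fun w _ => hdiff w)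
      hlip hzmem hvmem
    have hsimp : z + v - z = v := by abel
    rw [hsimp] at htay
    have h2 : ‖fderiv ℝ u z v‖ ≤ ‖u (z + v) - u z‖ + M * ‖v‖ * ‖v‖ := by
      have h3 : fderiv ℝ u z v = (u (z + v) - u z) - (u (z + v) - u z - fderiv ℝ u z v) := by
        ring
      calc ‖fderiv ℝ u z v‖
          = ‖(u (z + v) - u z) - (u (z + v) - u z - fderiv ℝ u z v)‖ := by conv_lhs => rw [h3]
        _ ≤ ‖u (z + v) - u z‖ + ‖u (z + v) - u z - fderiv ℝ u z v‖ := norm_sub_le _ _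
        _ ≤ ‖u (z + v) - u z‖ + M * ‖v‖ * ‖v‖ := by linarith
    have h4 : ‖u (z + v) - u z‖ ≤ 2 * A := by
      calc ‖u (z + v) - u z‖ ≤ ‖u (z + v)‖ + ‖u z‖ := norm_sub_le _ _
        _ ≤ A + A := add_le_add (hA _) (hA _)
        _ = 2 * A := by ring
    calc ‖fderiv ℝ u z v‖ ≤ ‖u (z + v) - u z‖ + M * ‖v‖ * ‖v‖ := h2
      _ ≤ 2 * A + M * ‖v‖ ^ 2 := by nlinarith [norm_nonneg v]
  have key2 : ∀ (z : EuclideanSpace ℝ (Fin d)), ∀ t : ℝ, 0 < t → ‖fderiv ℝ u z‖ ≤ 2 * A / t + M * t := by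
    intro z t ht
    apply ContinuousLinearMap.opNorm_le_bound _ (by positivity)
    intro v
    rcases eq_or_ne v 0 with rfl | hv
    · simp
    · have hvn : 0 < ‖v‖ := norm_pos_iff.2 hv
      have := key1 z ((t / ‖v‖) • v)
      rw [(fderiv ℝ u z).map_smul, norm_smul, norm_smul] at this
      have habs : ‖t / ‖v‖‖ = t / ‖v‖ := abs_of_pos (by positivity)
      rw [habs] at this
      have hwn : t / ‖v‖ * ‖v‖ = t := by field_simp
      rw [hwn] at this
      -- this : t / ‖v‖ * ‖fderiv u z v‖ ≤ 2A + M t²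
      rw [div_mul_eq_mul_div, div_le_iff₀ hvn] at this
      rw [← sub_nonneg] at this ⊢
      have hexp : (2 * A / t + M * t) * ‖v‖ - ‖fderiv ℝ u z v‖ =
          ((2 * A + M * t ^ 2) * ‖v‖ - t * ‖fderiv ℝ u z v‖) / t := by
        have hc2 : 2 * A / t * t = 2 * A := div_mul_cancel₀ _ ht.ne'
        rw [eq_div_iff ht.ne']
        linear_combination ‖v‖ * hc2
      rw [hexp]
      exact div_nonneg this ht.le
  by_cases hMz : M = 0
  · -- second derivative vanishes: gradient is zero
    have hD : ‖fderiv ℝ u x‖ = 0 := by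
      by_contra h
      have hpos : 0 < ‖fderiv ℝ u x‖ := (norm_nonneg _).lt_of_ne (Ne.symm h)
      have ht : 0 < 4 * A / ‖fderiv ℝ u x‖ := by positivity
      have h2 := key2 x _ ht
      rw [hMz, zero_mul, add_zero, div_div_eq_mul_div] at h2
      have he : 2 * A * ‖fderiv ℝ u x‖ / (4 * A) = ‖fderiv ℝ u x‖ / 2 := by
        field_simp; ring
      rw [he] at h2
      linarith
    rw [hD]
    exact hRHS0
  have hMpos : 0 < M := hM0.lt_of_ne (Ne.symm hMz)
  -- optimized Landau bound
  set G : ℝ := 3 * Real.sqrt (A * M) with hGdef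
  have hGpos : 0 < G := by
    have : 0 < Real.sqrt (A * M) := Real.sqrt_pos.2 (by positivity)
    positivity
  have hG2 : G ^ 2 = 9 * (A * M) := by
    rw [hGdef, mul_pow, Real.sq_sqrt (by positivity)]
    norm_num
  have hGle : ∀ z, ‖fderiv ℝ u z‖ ≤ G := by
    intro z
    set s := Real.sqrt (A / M) with hsdef
    have hspos : 0 < s := Real.sqrt_pos.2 (by positivity)
    have hs2 : s ^ 2 = A / M := Real.sq_sqrt (by positivity)
    have h1 := key2 z s hspos
    have h2 : 2 * A / s + M * s ≤ G := by
      have hMs : M * s ^ 2 = A := by rw [hs2]; field_simp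
      have hGs : G * s = 3 * A := by
        rw [hGdef, hsdef, mul_assoc, ← Real.sqrt_mul (by positivity)]
        have : A * M * (A / M) = A ^ 2 := by field_simp
        rw [this, Real.sqrt_sq hApos.le]
      rw [← sub_nonneg]
      have hexp : G - (2 * A / s + M * s) = (G * s - (2 * A + M * s ^ 2)) / s := by
        field_simp
      rw [hexp, hGs, hMs]
      have : 3 * A - (2 * A + A) = 0 := by ring
      rw [this]
      positivity
    exact h1.trans h2
  -- L² lower bound via a ball around the max point
  set r : ℝ := A / (2 * G) with hrdef
  have hrpos : 0 < r := by positivity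
  have hLip : ∀ y ∈ ball x₀ r, A / 2 ≤ |u y| := by
    intro y hy
    have h1 := convex_univ.norm_image_sub_le_of_norm_fderiv_le (f := u)
      (fun w _ => hdiff w) (fun w _ => hGle w) (mem_univ x₀) (mem_univ y)
    have h2 : ‖y - x₀‖ ≤ r := by
      rw [← dist_eq_norm]; exact (mem_ball.1 hy).le
    have h3 : ‖u y - u x₀‖ ≤ G * r := h1.trans (mul_le_mul_of_nonneg_left h2 hGpos.le)
    have h4 : G * r = A / 2 := by rw [hrdef]; field_simp
    have h5 : |u x₀| - |u y| ≤ |u y - u x₀| := by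
      rw [abs_sub_comm]
      exact abs_sub_abs_le_abs_sub _ _
    rw [h4] at h3
    have h6 := h5.trans h3
    simp only [← hAdef] at h6
    linarith
  have hint : Integrable (fun y => |u y| ^ 2) := by
    apply Continuous.integrable_of_hasCompactSupport
    · exact (hu.continuous.abs.pow 2)
    · exact hcs.comp_left (g := fun t : ℝ => |t| ^ 2) (by simp)
  have hIlb : (A / 2) ^ 2 * (volume (ball x₀ r)).toReal ≤ I := by
    have h1 : ∫ y in ball x₀ r, (A / 2) ^ 2 ≤ ∫ y in ball x₀ r, |u y| ^ 2 := by
      apply setIntegral_mono_on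
      · exact integrableOn_const measure_ball_lt_top.ne
      · exact hint.integrableOn
      · exact measurableSet_ball
      · intro y hy
        have := hLip y hy
        have h0 : (0:ℝ) ≤ A / 2 := by positivity
        nlinarith [abs_nonneg (u y)]
    have h2 : ∫ y in ball x₀ r, |u y| ^ 2 ≤ I := setIntegral_le_integral hint
      (Filter.Eventually.of_forall fun y => by positivity)
    have h3 : ∫ y in ball x₀ r, ((A / 2) ^ 2 : ℝ) = (volume (ball x₀ r)).toReal * (A / 2) ^ 2 := by
      rw [setIntegral_const]; simp [smul_eq_mul, measureReal_def]
    rw [h3] at h1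
    linarith
  have hvol : (volume (ball x₀ r)).toReal = r ^ d * c := by
    rw [Measure.addHaar_ball volume x₀ hrpos.le, ENNReal.toReal_mul,
      ENNReal.toReal_ofReal (by positivity), finrank_euclideanSpace_fin]
  rw [hvol] at hIlb
  -- key algebraic inequality : G ^ (d + 4) ≤ K * M ^ (d + 2) * I
  have hIpos : 0 < I := lt_of_lt_of_le (by positivity) hIlb
  have hstepB : A ^ (d + 2) * c ≤ 2 ^ (d + 2) * G ^ d * I := by
    have h1 : (A / 2) ^ 2 * ((A / (2 * G)) ^ d * c) ≤ I := by
      rw [← hrdef]; exact hIlb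
    have h2 : (A / 2) ^ 2 * ((A / (2 * G)) ^ d * c) =
        A ^ (d + 2) * c / (2 ^ (d + 2) * G ^ d) := by
      rw [div_pow, div_pow, mul_pow]
      field_simp
      ring
    rw [h2, div_le_iff₀ (by positivity)] at h1
    calc A ^ (d + 2) * c ≤ I * (2 ^ (d + 2) * G ^ d) := h1
      _ = 2 ^ (d + 2) * G ^ d * I := by ring
  have hkey : G ^ (d + 4) ≤ K * M ^ (d + 2) * I := by
    have h1 : G ^ (2 * (d + 2)) * c = 9 ^ (d + 2) * (A ^ (d + 2) * c) * M ^ (d + 2) := by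
      rw [pow_mul, hG2, mul_pow, mul_pow]
      ring
    have h2 : G ^ (2 * (d + 2)) * c ≤ 9 ^ (d + 2) * (2 ^ (d + 2) * G ^ d * I) * M ^ (d + 2) := by
      rw [h1]
      exact mul_le_mul_of_nonneg_right
        (mul_le_mul_of_nonneg_left hstepB (by positivity)) (by positivity)
    have h3 : G ^ (2 * (d + 2)) = G ^ d * G ^ (d + 4) := by
      rw [← pow_add]; congr 1; ring
    rw [h3] at h2
    have h4 : 9 ^ (d + 2) * (2 ^ (d + 2) * G ^ d * I) * M ^ (d + 2) =
        G ^ d * (18 ^ (d + 2) * I * M ^ (d + 2)) := by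
      have h18 : (18 : ℝ) ^ (d + 2) = 9 ^ (d + 2) * 2 ^ (d + 2) := by
        rw [← mul_pow]; norm_num
      rw [h18]; ring
    rw [h4] at h2
    have h5 : G ^ (d + 4) * c ≤ 18 ^ (d + 2) * I * M ^ (d + 2) := by
      have hGd : 0 < G ^ d := pow_pos hGpos d
      have h2' : G ^ d * (G ^ (d + 4) * c) ≤ G ^ d * (18 ^ (d + 2) * I * M ^ (d + 2)) := by
        calc G ^ d * (G ^ (d + 4) * c) = G ^ d * G ^ (d + 4) * c := by ring
          _ ≤ _ := h2
      exact le_of_mul_le_mul_left h2' hGd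
    rw [hKdef]
    rw [div_mul_eq_mul_div, div_mul_eq_mul_div, le_div_iff₀ hc]
    calc G ^ (d + 4) * c ≤ 18 ^ (d + 2) * I * M ^ (d + 2) := h5
      _ = 18 ^ (d + 2) * M ^ (d + 2) * I := by ring
  -- conclude via rpow
  have hfinal : G ≤ K ^ ((1 : ℝ) / ((d : ℝ) + 4)) * M ^ (((d : ℝ) + 2) / ((d : ℝ) + 4)) *
      I ^ ((1 : ℝ) / ((d : ℝ) + 4)) := by
    have hd4 : ((d : ℝ) + 4) ≠ 0 := by positivity
    have h1 : G = (G ^ (d + 4) : ℝ) ^ ((1 : ℝ) / ((d : ℝ) + 4)) := by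
      rw [← Real.rpow_natCast G (d + 4), ← Real.rpow_mul hGpos.le]
      push_cast
      rw [mul_one_div, div_self hd4, Real.rpow_one]
    rw [h1]
    have h2 : (G ^ (d + 4) : ℝ) ^ ((1 : ℝ) / ((d : ℝ) + 4)) ≤
        (K * M ^ (d + 2) * I) ^ ((1 : ℝ) / ((d : ℝ) + 4)) :=
      Real.rpow_le_rpow (by positivity) hkey (by positivity)
    refine h2.trans_eq ?_
    rw [Real.mul_rpow (by positivity) hIpos.le, Real.mul_rpow hK.le (by positivity)]
    congr 1
    congr 1
    rw [← Real.rpow_natCast M (d + 2), ← Real.rpow_mul hMpos.le]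
    congr 1
    push_cast
    rw [mul_one_div]
  exact (hGle x).trans hfinal
end
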